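/- Both sides of the symmetric bibasic transformation equal the power series ∑_{j=0}^∞ (b;q)_j (a;p)_j / ((q;q)_j (p;p)_j) · x^j. Precisely, for |a|,|b|,|p|,|q|,|x| < 1: ((a;p)_∞/(p;p)_∞) ∑_{k=0}^∞ (p/a;p)_k (x b p^k; q)_∞ a^k / ((p;p)_k (x p^k; q)_∞) = ∑_{j=0}^∞ (b;q)_j (a;p)_j x^j / ((q;q)_j (p;p)_j). -/

import Mathlib

set_option maxHeartbeats 1000000

/-- The q-Pochhammer symbol `(a;q)_n = ∏_{j=0}^{n-1} (1 - a q^j)`. -/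
noncomputable def qPoch (a q : ℂ) (n : ℕ) : ℂ := ∏ j ∈ Finset.range n, (1 - a * q ^ j)

/-- The infinite q-Pochhammer symbol `(a;q)_∞ = ∏_{j=0}^{∞} (1 - a q^j)`. -/
noncomputable def qPochInf (a q : ℂ) : ℂ := ∏' j : ℕ, (1 - a * q ^ j)

open Filter Finset

lemma qp_factor_ne {c q : ℂ} (hc : ‖c‖ < 1) (hq : ‖q‖ ≤ 1) (j : ℕ) : (1 : ℂ) - c * q ^ j ≠ 0 := by
  intro h
  have h1 : c * q ^ j = 1 := by linear_combination -h
  have : ‖c * q ^ j‖ < 1 := by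
    rw [norm_mul, norm_pow]
    calc ‖c‖ * ‖q‖ ^ j ≤ ‖c‖ * 1 := by
          gcongr
          exact pow_le_one₀ (norm_nonneg q) hq
      _ < 1 := by simpa using hc
  rw [h1] at this; simp at this

lemma qPoch_ne_zero {c q : ℂ} (hc : ‖c‖ < 1) (hq : ‖q‖ ≤ 1) (n : ℕ) : qPoch c q n ≠ 0 :=
  Finset.prod_ne_zero_iff.mpr fun j _ => qp_factor_ne hc hq j

lemma qPoch_succ (c q : ℂ) (n : ℕ) : qPoch c q (n + 1) = qPoch c q n * (1 - c * q ^ n) :=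
  Finset.prod_range_succ _ _

lemma qp_summable_log {c q : ℂ} (hq : ‖q‖ < 1) :
    Summable fun j : ℕ => Complex.log (1 - c * q ^ j) := by
  have hgeo : Summable fun j : ℕ => (3 / 2 * ‖c‖) * ‖q‖ ^ j :=
    (summable_geometric_of_lt_one (norm_nonneg q) hq).mul_left _
  apply Summable.of_norm_bounded_eventually hgeo
  rw [Nat.cofinite_eq_atTop]
  have htend : Tendsto (fun j : ℕ => ‖c‖ * ‖q‖ ^ j) atTop (nhds 0) := by
    simpa using (tendsto_pow_atTop_nhds_zero_of_lt_one (norm_nonneg q) hq).const_mul ‖c‖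
  have hev : ∀ᶠ j : ℕ in atTop, ‖c‖ * ‖q‖ ^ j ≤ 1 / 2 :=
    htend.eventually (eventually_le_nhds (by norm_num))
  filter_upwards [hev] with j hj
  have h1 : (1 : ℂ) - c * q ^ j = 1 + -(c * q ^ j) := by ring
  rw [h1]
  have h2 : ‖-(c * q ^ j)‖ ≤ 1 / 2 := by
    rw [norm_neg, norm_mul, norm_pow]; exact hj
  calc ‖Complex.log (1 + -(c * q ^ j))‖ ≤ 3 / 2 * ‖-(c * q ^ j)‖ :=
        Complex.norm_log_one_add_half_le_self h2
    _ = 3 / 2 * ‖c‖ * ‖q‖ ^ j := by rw [norm_neg, norm_mul, norm_pow, mul_assoc]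
    _ = 3 / 2 * ‖c‖ * ‖q‖ ^ j := rfl

lemma qp_multipliable {c q : ℂ} (hc : ‖c‖ < 1) (hq : ‖q‖ < 1) :
    Multipliable fun j : ℕ => (1 : ℂ) - c * q ^ j :=
  Complex.multipliable_of_summable_log (qp_summable_log hq)

lemma qPoch_tendsto {c q : ℂ} (hc : ‖c‖ < 1) (hq : ‖q‖ < 1) :
    Tendsto (fun n => qPoch c q n) atTop (nhds (qPochInf c q)) :=
  (qp_multipliable hc hq).hasProd.tendsto_prod_nat

lemma geom_partial_le {r : ℝ} (hr0 : 0 ≤ r) (hr : r < 1) (n : ℕ) :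
    ∑ j ∈ Finset.range n, r ^ j ≤ (1 - r)⁻¹ := by
  have := Summable.sum_le_tsum (Finset.range n) (fun j _ => pow_nonneg hr0 j)
    (summable_geometric_of_lt_one hr0 hr)
  rwa [tsum_geometric_of_lt_one hr0 hr] at this

lemma qPoch_norm_le (c : ℂ) {q : ℂ} (hq : ‖q‖ < 1) (n : ℕ) :
    ‖qPoch c q n‖ ≤ Real.exp (‖c‖ * (1 - ‖q‖)⁻¹) := by
  rw [qPoch, norm_prod]
  calc ∏ j ∈ Finset.range n, ‖1 - c * q ^ j‖
      ≤ ∏ j ∈ Finset.range n, Real.exp (‖c‖ * ‖q‖ ^ j) := by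
        apply Finset.prod_le_prod (fun j _ => norm_nonneg _)
        intro j _
        calc ‖1 - c * q ^ j‖ ≤ ‖(1 : ℂ)‖ + ‖c * q ^ j‖ := norm_sub_le _ _
          _ = ‖c‖ * ‖q‖ ^ j + 1 := by rw [norm_one, norm_mul, norm_pow]; ring
          _ ≤ Real.exp (‖c‖ * ‖q‖ ^ j) := Real.add_one_le_exp _
    _ = Real.exp (∑ j ∈ Finset.range n, ‖c‖ * ‖q‖ ^ j) := by rw [Real.exp_sum]
    _ ≤ Real.exp (‖c‖ * (1 - ‖q‖)⁻¹) := by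
        apply Real.exp_le_exp.mpr
        rw [← Finset.mul_sum]
        exact mul_le_mul_of_nonneg_left (geom_partial_le (norm_nonneg q) hq n) (norm_nonneg c)

lemma exp_le_one_sub {s s₀ : ℝ} (h0 : 0 ≤ s) (hs : s ≤ s₀) (h1 : s₀ < 1) :
    Real.exp (-(s / (1 - s₀))) ≤ 1 - s := by
  have ht0 : 0 ≤ s / (1 - s₀) := div_nonneg h0 (by linarith)
  have h2 : 1 + s / (1 - s₀) ≤ Real.exp (s / (1 - s₀)) := by
    have := Real.add_one_le_exp (s / (1 - s₀)); linarith
  have h3 : Real.exp (-(s / (1 - s₀))) ≤ (1 + s / (1 - s₀))⁻¹ := by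
    rw [Real.exp_neg]
    exact inv_anti₀ (by linarith) h2
  refine h3.trans ?_
  have hpos : (0:ℝ) < 1 - s₀ := by linarith
  rw [inv_le_iff_one_le_mul₀ (by positivity)]
  have key : (1 + s / (1 - s₀)) * (1 - s) - 1 = (s * (s₀ - s)) / (1 - s₀) := by
    field_simp; ring
  nlinarith [div_nonneg (mul_nonneg h0 (by linarith : (0:ℝ) ≤ s₀ - s)) hpos.le]

lemma qPoch_norm_ge (c : ℂ) {q : ℂ} {r : ℝ} (hcr : ‖c‖ ≤ r) (hr : r < 1) (hq : ‖q‖ < 1) (n : ℕ) :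
    Real.exp (-(r * (1 - ‖q‖)⁻¹ / (1 - r))) ≤ ‖qPoch c q n‖ := by
  have hr0 : 0 ≤ r := le_trans (norm_nonneg c) hcr
  rw [qPoch, norm_prod]
  calc Real.exp (-(r * (1 - ‖q‖)⁻¹ / (1 - r)))
      ≤ Real.exp (-((∑ j ∈ Finset.range n, ‖c‖ * ‖q‖ ^ j) / (1 - r))) := by
        apply Real.exp_le_exp.mpr
        rw [neg_le_neg_iff]
        apply div_le_div_of_nonneg_right ?_ (by linarith)
        calc ∑ j ∈ Finset.range n, ‖c‖ * ‖q‖ ^ j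
            = ‖c‖ * ∑ j ∈ Finset.range n, ‖q‖ ^ j := by rw [Finset.mul_sum]
          _ ≤ r * (1 - ‖q‖)⁻¹ := by
              apply mul_le_mul hcr (geom_partial_le (norm_nonneg q) hq n)
                (Finset.sum_nonneg fun j _ => pow_nonneg (norm_nonneg q) j) hr0
    _ = ∏ j ∈ Finset.range n, Real.exp (-(‖c‖ * ‖q‖ ^ j / (1 - r))) := by
        rw [← Real.exp_sum]
        congr 1
        simp [neg_div, Finset.sum_div]
    _ ≤ ∏ j ∈ Finset.range n, ‖1 - c * q ^ j‖ := by
        apply Finset.prod_le_prod (fun j _ => (Real.exp_pos _).le)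
        intro j _
        have hsj : ‖c‖ * ‖q‖ ^ j ≤ r := by
          calc ‖c‖ * ‖q‖ ^ j ≤ r * 1 := by
                apply mul_le_mul hcr (pow_le_one₀ (norm_nonneg q) hq.le)
                  (pow_nonneg (norm_nonneg q) j) hr0
            _ = r := mul_one r
        calc Real.exp (-(‖c‖ * ‖q‖ ^ j / (1 - r)))
            ≤ 1 - ‖c‖ * ‖q‖ ^ j :=
              exp_le_one_sub (by positivity) hsj hr
          _ ≤ ‖1 - c * q ^ j‖ := by
              have := norm_sub_norm_le (1 : ℂ) (c * q ^ j)
              rw [norm_one, norm_mul, norm_pow] at this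
              linarith

lemma qPochInf_norm_ge (c : ℂ) {q : ℂ} {r : ℝ} (hcr : ‖c‖ ≤ r) (hr : r < 1) (hq : ‖q‖ < 1) :
    Real.exp (-(r * (1 - ‖q‖)⁻¹ / (1 - r))) ≤ ‖qPochInf c q‖ :=
  ge_of_tendsto ((qPoch_tendsto (lt_of_le_of_lt hcr hr) hq).norm)
    (Eventually.of_forall fun n => qPoch_norm_ge c hcr hr hq n)

lemma qPochInf_ne_zero {c q : ℂ} (hc : ‖c‖ < 1) (hq : ‖q‖ < 1) : qPochInf c q ≠ 0 := by
  have := qPochInf_norm_ge c (le_refl ‖c‖) hc hq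
  intro h
  rw [h, norm_zero] at this
  exact absurd this (not_le.mpr (Real.exp_pos _))

lemma summable_geom_bound (f : ℕ → ℂ) {K r : ℝ} (hr0 : 0 ≤ r) (hr : r < 1)
    (h : ∀ n, ‖f n‖ ≤ K * r ^ n) : Summable f :=
  Summable.of_norm_bounded ((summable_geometric_of_lt_one hr0 hr).mul_left K) h

/-- The q-binomial theorem. -/
theorem qBinom (c q z : ℂ) (hq : ‖q‖ < 1) (hz : ‖z‖ < 1) (hcz : ‖c * z‖ < 1) :
    ∑' n : ℕ, qPoch c q n / qPoch q q n * z ^ n = qPochInf (c * z) q / qPochInf z q := by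
  set C : ℕ → ℂ := fun n => qPoch c q n / qPoch q q n with hC
  -- uniform bound on coefficients
  set M : ℝ := Real.exp (‖c‖ * (1 - ‖q‖)⁻¹) / Real.exp (-(‖q‖ * (1 - ‖q‖)⁻¹ / (1 - ‖q‖))) with hM
  have hM0 : 0 < M := div_pos (Real.exp_pos _) (Real.exp_pos _)
  have hCb : ∀ n, ‖C n‖ ≤ M := by
    intro n
    rw [hC]
    simp only [norm_div]
    exact div_le_div₀ (Real.exp_pos _).le (qPoch_norm_le c hq n) (Real.exp_pos _)
      (qPoch_norm_ge q (le_refl ‖q‖) hq hq n)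
  have hC0 : C 0 = 1 := by simp [hC, qPoch]
  have hqq1 : ‖q‖ ≤ 1 := hq.le
  have hrec : ∀ n, C (n + 1) * (1 - q ^ (n + 1)) = C n * (1 - c * q ^ n) := by
    intro n
    have h1 : qPoch q q n ≠ 0 := qPoch_ne_zero hq hqq1 n
    have h2 : (1 : ℂ) - q * q ^ n ≠ 0 := qp_factor_ne hq hqq1 n
    rw [hC]
    simp only
    rw [qPoch_succ, qPoch_succ]
    rw [pow_succ']
    simp only [div_eq_mul_inv, mul_inv]
    linear_combination (qPoch c q n * (1 - c * q ^ n) * (qPoch q q n)⁻¹) * mul_inv_cancel₀ h2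
  set F : ℂ → ℂ := fun w => ∑' n : ℕ, C n * w ^ n with hF
  have hsum : ∀ w : ℂ, ‖w‖ < 1 → Summable (fun n => C n * w ^ n) := by
    intro w hw
    apply summable_geom_bound _ (norm_nonneg w) hw
    intro n
    rw [norm_mul, norm_pow]
    exact mul_le_mul_of_nonneg_right (hCb n) (by positivity)
  -- functional equation
  have hFE : ∀ w : ℂ, ‖w‖ < 1 → (1 - w) * F w = (1 - c * w) * F (q * w) := by
    intro w hw
    have hqw : ‖q * w‖ < 1 := by
      rw [norm_mul]
      calc ‖q‖ * ‖w‖ ≤ 1 * ‖w‖ := by gcongr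
        _ = ‖w‖ := one_mul _
        _ < 1 := hw
    have hA : Summable (fun n => C n * (1 - q ^ n) * w ^ n) := by
      apply summable_geom_bound _ (norm_nonneg w) hw (K := M * 2)
      intro n
      rw [norm_mul, norm_mul, norm_pow]
      have h1 : ‖(1 : ℂ) - q ^ n‖ ≤ 2 := by
        calc ‖(1:ℂ) - q ^ n‖ ≤ ‖(1:ℂ)‖ + ‖q ^ n‖ := norm_sub_le _ _
          _ ≤ 1 + 1 := by
              rw [norm_one, norm_pow]
              have := pow_le_one₀ (norm_nonneg q) hq.le (n := n)
              linarith
          _ = 2 := by norm_num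
      have := mul_le_mul (hCb n) h1 (norm_nonneg _) hM0.le
      exact mul_le_mul_of_nonneg_right this (by positivity)
    have hB : Summable (fun n => C n * (1 - c * q ^ n) * w ^ (n + 1)) := by
      apply summable_geom_bound _ (norm_nonneg w) hw (K := M * (1 + ‖c‖) * ‖w‖)
      intro n
      rw [norm_mul, norm_mul, norm_pow, pow_succ]
      have h1 : ‖(1 : ℂ) - c * q ^ n‖ ≤ 1 + ‖c‖ := by
        calc ‖(1:ℂ) - c * q ^ n‖ ≤ ‖(1:ℂ)‖ + ‖c * q ^ n‖ := norm_sub_le _ _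
          _ ≤ 1 + ‖c‖ := by
              rw [norm_one, norm_mul, norm_pow]
              have h2 : ‖c‖ * ‖q‖ ^ n ≤ ‖c‖ * 1 :=
                mul_le_mul_of_nonneg_left (pow_le_one₀ (norm_nonneg q) hq.le) (norm_nonneg c)
              linarith
      calc ‖C n‖ * ‖1 - c * q ^ n‖ * (‖w‖ ^ n * ‖w‖)
          ≤ M * (1 + ‖c‖) * (‖w‖ ^ n * ‖w‖) := by
            apply mul_le_mul_of_nonneg_right _ (by positivity)
            exact mul_le_mul (hCb n) h1 (norm_nonneg _) hM0.le
        _ = M * (1 + ‖c‖) * ‖w‖ * ‖w‖ ^ n := by ring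
    have key : ∑' n : ℕ, C n * (1 - q ^ n) * w ^ n
        = ∑' n : ℕ, C n * (1 - c * q ^ n) * w ^ (n + 1) := by
      rw [Summable.tsum_eq_zero_add hA]
      have h0 : C 0 * (1 - q ^ 0) * w ^ 0 = 0 := by simp
      rw [h0, zero_add]
      apply tsum_congr
      intro n
      rw [hrec n]
    have hs1 : Summable (fun n => (1 - w) * (C n * w ^ n)) := (hsum w hw).mul_left _
    have hs2 : Summable (fun n => (1 - c * w) * (C n * (q * w) ^ n)) := (hsum _ hqw).mul_left _
    have expand : (1 - w) * F w - (1 - c * w) * F (q * w)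
        = ∑' n : ℕ, ((1 - w) * (C n * w ^ n) - (1 - c * w) * (C n * (q * w) ^ n)) := by
      rw [hF]
      simp only
      rw [← tsum_mul_left, ← tsum_mul_left]
      exact (Summable.tsum_sub hs1 hs2).symm
    have termwise : ∀ n : ℕ, (1 - w) * (C n * w ^ n) - (1 - c * w) * (C n * (q * w) ^ n)
        = C n * (1 - q ^ n) * w ^ n - C n * (1 - c * q ^ n) * w ^ (n + 1) := by
      intro n
      ring
    have : (1 - w) * F w - (1 - c * w) * F (q * w) = 0 := by
      rw [expand, tsum_congr termwise, Summable.tsum_sub hA hB, key, sub_self]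
    exact sub_eq_zero.mp this
  -- iteration
  have hIt : ∀ N : ℕ, qPoch z q N * F z = qPoch (c * z) q N * F (q ^ N * z) := by
    intro N
    induction N with
    | zero => simp [qPoch]
    | succ N ih =>
      have hqNz : ‖q ^ N * z‖ < 1 := by
        rw [norm_mul, norm_pow]
        calc ‖q‖ ^ N * ‖z‖ ≤ 1 * ‖z‖ := by
              apply mul_le_mul_of_nonneg_right (pow_le_one₀ (norm_nonneg q) hq.le) (norm_nonneg z)
          _ = ‖z‖ := one_mul _
          _ < 1 := hz
      have hfe := hFE (q ^ N * z) hqNz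
      have hpow : q * (q ^ N * z) = q ^ (N + 1) * z := by ring
      rw [hpow] at hfe
      rw [qPoch_succ, qPoch_succ]
      linear_combination (1 - z * q ^ N) * ih + qPoch (c * z) q N * hfe
  -- limits
  have hT1 : Tendsto (fun N => qPoch z q N * F z) atTop (nhds (qPochInf z q * F z)) :=
    (qPoch_tendsto hz hq).mul_const _
  have hF0 : Tendsto (fun N : ℕ => F (q ^ N * z)) atTop (nhds 1) := by
    rw [tendsto_iff_norm_sub_tendsto_zero]
    have hbound : ∀ N : ℕ, ‖F (q ^ N * z) - 1‖ ≤ M * (1 - ‖z‖)⁻¹ * ‖z‖ * ‖q‖ ^ N := by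
      intro N
      have hwz : ‖q ^ N * z‖ ≤ ‖z‖ := by
        rw [norm_mul, norm_pow]
        calc ‖q‖ ^ N * ‖z‖ ≤ 1 * ‖z‖ :=
              mul_le_mul_of_nonneg_right (pow_le_one₀ (norm_nonneg q) hq.le) (norm_nonneg z)
          _ = ‖z‖ := one_mul _
      have hw1 : ‖q ^ N * z‖ < 1 := lt_of_le_of_lt hwz hz
      set w := q ^ N * z with hwdef
      have hsw := hsum w hw1
      have htail : Summable (fun n : ℕ => C (n + 1) * w ^ (n + 1)) := by
        apply summable_geom_bound _ (norm_nonneg w) hw1 (K := M * ‖w‖)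
        intro n
        rw [norm_mul, norm_pow, pow_succ]
        calc ‖C (n + 1)‖ * (‖w‖ ^ n * ‖w‖) ≤ M * (‖w‖ ^ n * ‖w‖) :=
              mul_le_mul_of_nonneg_right (hCb _) (by positivity)
          _ = M * ‖w‖ * ‖w‖ ^ n := by ring
      have hFsplit : F w = 1 + ∑' n : ℕ, C (n + 1) * w ^ (n + 1) := by
        rw [hF]
        simp only
        rw [Summable.tsum_eq_zero_add hsw, hC0]
        simp
      rw [hFsplit]
      simp only [add_sub_cancel_left]
      have h1 : ‖∑' n : ℕ, C (n + 1) * w ^ (n + 1)‖ ≤ M * ‖z‖ * ‖q‖ ^ N * (1 - ‖z‖)⁻¹ := by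
        apply tsum_of_norm_bounded ((hasSum_geometric_of_lt_one (norm_nonneg z) hz).mul_left
          (M * ‖z‖ * ‖q‖ ^ N))
        intro n
        rw [norm_mul, norm_pow, pow_succ]
        have hwle : ‖w‖ ≤ ‖z‖ * ‖q‖ ^ N := by
          rw [hwdef, norm_mul, norm_pow]; ring_nf; exact le_refl _
        calc ‖C (n + 1)‖ * (‖w‖ ^ n * ‖w‖) ≤ M * (‖z‖ ^ n * (‖z‖ * ‖q‖ ^ N)) := by
              apply mul_le_mul (hCb _) _ (by positivity) hM0.le
              exact mul_le_mul (pow_le_pow_left₀ (norm_nonneg w) hwz n) hwle (norm_nonneg w)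
                (by positivity)
          _ = M * ‖z‖ * ‖q‖ ^ N * ‖z‖ ^ n := by ring
      calc ‖∑' n : ℕ, C (n + 1) * w ^ (n + 1)‖ ≤ M * ‖z‖ * ‖q‖ ^ N * (1 - ‖z‖)⁻¹ := h1
        _ = M * (1 - ‖z‖)⁻¹ * ‖z‖ * ‖q‖ ^ N := by ring
    have hgeo0 : Tendsto (fun N : ℕ => M * (1 - ‖z‖)⁻¹ * ‖z‖ * ‖q‖ ^ N) atTop (nhds 0) := by
      simpa using (tendsto_pow_atTop_nhds_zero_of_lt_one (norm_nonneg q) hq).const_mul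
        (M * (1 - ‖z‖)⁻¹ * ‖z‖)
    exact squeeze_zero (fun N => norm_nonneg _) hbound hgeo0
  have hT2 : Tendsto (fun N => qPoch z q N * F z) atTop (nhds (qPochInf (c * z) q * 1)) := by
    apply Tendsto.congr (fun N => (hIt N).symm)
    exact (qPoch_tendsto hcz hq).mul hF0
  have hEq : qPochInf z q * F z = qPochInf (c * z) q * 1 := tendsto_nhds_unique hT1 hT2
  have hne : qPochInf z q ≠ 0 := qPochInf_ne_zero hz hq
  show F z = qPochInf (c * z) q / qPochInf z q
  rw [eq_div_iff hne]
  linear_combination hEq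

lemma qPochInf_split {c q : ℂ} (hc : ‖c‖ < 1) (hq : ‖q‖ < 1) (j : ℕ) :
    qPochInf c q = qPoch c q j * qPochInf (c * q ^ j) q := by
  have hm : Multipliable fun i : ℕ => (1 : ℂ) - c * q ^ (i + j) := by
    have hcq : ‖c * q ^ j‖ < 1 := by
      rw [norm_mul, norm_pow]
      calc ‖c‖ * ‖q‖ ^ j ≤ ‖c‖ * 1 :=
            mul_le_mul_of_nonneg_left (pow_le_one₀ (norm_nonneg q) hq.le) (norm_nonneg c)
        _ = ‖c‖ := mul_one _
        _ < 1 := hc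
    apply (qp_multipliable hcq hq).congr
    intro i
    rw [pow_add]
    ring
  rw [qPochInf, ← Multipliable.prod_mul_tprod_nat_mul' hm]
  congr 1
  rw [qPochInf]
  apply tprod_congr
  intro i
  rw [pow_add]
  ring

/-- Both sides of the symmetric bibasic transformation equal
`∑_{j≥0} (b;q)_j (a;p)_j x^j / ((q;q)_j (p;p)_j)`. -/
theorem stmt3 (a b p q x : ℂ) (ha0 : a ≠ 0)
    (ha : ‖a‖ < 1) (hb : ‖b‖ < 1) (hp : ‖p‖ < 1) (hq : ‖q‖ < 1) (hx : ‖x‖ < 1) :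
    (qPochInf a p / qPochInf p p) *
        ∑' k : ℕ, qPoch (p / a) p k * qPochInf (x * b * p ^ k) q * a ^ k /
          (qPoch p p k * qPochInf (x * p ^ k) q)
      = ∑' j : ℕ, qPoch b q j * qPoch a p j * x ^ j / (qPoch q q j * qPoch p p j) := by
  -- norms of auxiliary quantities
  have hpk : ∀ k : ℕ, ‖x * p ^ k‖ < 1 := by
    intro k
    rw [norm_mul, norm_pow]
    calc ‖x‖ * ‖p‖ ^ k ≤ ‖x‖ * 1 :=
          mul_le_mul_of_nonneg_left (pow_le_one₀ (norm_nonneg p) hp.le) (norm_nonneg x)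
      _ = ‖x‖ := mul_one _
      _ < 1 := hx
  have hbpk : ∀ k : ℕ, ‖b * (x * p ^ k)‖ < 1 := by
    intro k
    rw [norm_mul]
    calc ‖b‖ * ‖x * p ^ k‖ ≤ 1 * ‖x * p ^ k‖ :=
          mul_le_mul_of_nonneg_right hb.le (norm_nonneg _)
      _ = ‖x * p ^ k‖ := one_mul _
      _ < 1 := hpk k
  have hapj : ∀ j : ℕ, ‖a * p ^ j‖ < 1 := by
    intro j
    rw [norm_mul, norm_pow]
    calc ‖a‖ * ‖p‖ ^ j ≤ ‖a‖ * 1 :=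
          mul_le_mul_of_nonneg_left (pow_le_one₀ (norm_nonneg p) hp.le) (norm_nonneg a)
      _ = ‖a‖ := mul_one _
      _ < 1 := ha
  have hppj : ∀ j : ℕ, ‖p * p ^ j‖ < 1 := by
    intro j
    rw [norm_mul, norm_pow]
    calc ‖p‖ * ‖p‖ ^ j ≤ ‖p‖ * 1 :=
          mul_le_mul_of_nonneg_left (pow_le_one₀ (norm_nonneg p) hp.le) (norm_nonneg p)
      _ = ‖p‖ := mul_one _
      _ < 1 := hp
  -- step 1: rewrite each term of the k-sum via the q-binomial theorem
  have hk : ∀ k : ℕ, qPoch (p / a) p k * qPochInf (x * b * p ^ k) q * a ^ k /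
        (qPoch p p k * qPochInf (x * p ^ k) q)
      = ∑' j : ℕ, (qPoch (p / a) p k / qPoch p p k * a ^ k) *
          (qPoch b q j / qPoch q q j * (x * p ^ k) ^ j) := by
    intro k
    rw [tsum_mul_left, qBinom b q (x * p ^ k) hq (hpk k) (hbpk k)]
    have hxb : x * b * p ^ k = b * (x * p ^ k) := by ring
    rw [hxb]
    have h1 : qPoch p p k ≠ 0 := qPoch_ne_zero hp hp.le k
    have h2 : qPochInf (x * p ^ k) q ≠ 0 := qPochInf_ne_zero (hpk k) hq
    field_simp
  rw [tsum_congr hk]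
  -- step 2: Fubini
  have hfub : Summable (Function.uncurry fun k j : ℕ =>
      (qPoch (p / a) p k / qPoch p p k * a ^ k) *
        (qPoch b q j / qPoch q q j * (x * p ^ k) ^ j)) := by
    set M₁ : ℝ := Real.exp (‖p / a‖ * (1 - ‖p‖)⁻¹) /
      Real.exp (-(‖p‖ * (1 - ‖p‖)⁻¹ / (1 - ‖p‖))) with hM₁
    set M₂ : ℝ := Real.exp (‖b‖ * (1 - ‖q‖)⁻¹) /
      Real.exp (-(‖q‖ * (1 - ‖q‖)⁻¹ / (1 - ‖q‖))) with hM₂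
    have hM₁0 : 0 < M₁ := div_pos (Real.exp_pos _) (Real.exp_pos _)
    have hM₂0 : 0 < M₂ := div_pos (Real.exp_pos _) (Real.exp_pos _)
    have hD : ∀ k : ℕ, ‖qPoch (p / a) p k / qPoch p p k‖ ≤ M₁ := by
      intro k
      rw [norm_div]
      exact div_le_div₀ (Real.exp_pos _).le (qPoch_norm_le _ hp k) (Real.exp_pos _)
        (qPoch_norm_ge p (le_refl ‖p‖) hp hp k)
    have hCb : ∀ j : ℕ, ‖qPoch b q j / qPoch q q j‖ ≤ M₂ := by
      intro j
      rw [norm_div]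
      exact div_le_div₀ (Real.exp_pos _).le (qPoch_norm_le _ hq j) (Real.exp_pos _)
        (qPoch_norm_ge q (le_refl ‖q‖) hq hq j)
    apply Summable.of_norm_bounded (g := fun m : ℕ × ℕ => (M₁ * ‖a‖ ^ m.1) * (M₂ * ‖x‖ ^ m.2))
    · exact Summable.mul_of_nonneg
        ((summable_geometric_of_lt_one (norm_nonneg a) ha).mul_left M₁)
        ((summable_geometric_of_lt_one (norm_nonneg x) hx).mul_left M₂)
        (fun k => by positivity) (fun j => by positivity)
    · rintro ⟨k, j⟩
      simp only [Function.uncurry]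
      rw [norm_mul, norm_mul, norm_mul, norm_pow, norm_pow]
      have h3 : ‖x * p ^ k‖ ^ j ≤ ‖x‖ ^ j := by
        apply pow_le_pow_left₀ (norm_nonneg _)
        rw [norm_mul, norm_pow]
        calc ‖x‖ * ‖p‖ ^ k ≤ ‖x‖ * 1 :=
              mul_le_mul_of_nonneg_left (pow_le_one₀ (norm_nonneg p) hp.le) (norm_nonneg x)
          _ = ‖x‖ := mul_one _
      calc ‖qPoch (p / a) p k / qPoch p p k‖ * ‖a‖ ^ k *
            (‖qPoch b q j / qPoch q q j‖ * ‖x * p ^ k‖ ^ j)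
          ≤ M₁ * ‖a‖ ^ k * (M₂ * ‖x‖ ^ j) := by
            apply mul_le_mul _ _ (by positivity) (by positivity)
            · exact mul_le_mul_of_nonneg_right (hD k) (by positivity)
            · exact mul_le_mul (hCb j) h3 (by positivity) hM₂0.le
        _ = M₁ * ‖a‖ ^ k * (M₂ * ‖x‖ ^ j) := rfl
  rw [← Summable.tsum_comm hfub]
  -- step 3: inner k-sum via the q-binomial theorem
  have hj : ∀ j : ℕ, ∑' k : ℕ, (qPoch (p / a) p k / qPoch p p k * a ^ k) *
        (qPoch b q j / qPoch q q j * (x * p ^ k) ^ j)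
      = (qPoch b q j / qPoch q q j * x ^ j) *
          (qPochInf (p * p ^ j) p / qPochInf (a * p ^ j) p) := by
    intro j
    have hterm : ∀ k : ℕ, (qPoch (p / a) p k / qPoch p p k * a ^ k) *
          (qPoch b q j / qPoch q q j * (x * p ^ k) ^ j)
        = (qPoch b q j / qPoch q q j * x ^ j) *
            (qPoch (p / a) p k / qPoch p p k * (a * p ^ j) ^ k) := by
      intro k
      have hpow : (p ^ k) ^ j = (p ^ j) ^ k := by
        rw [← pow_mul, ← pow_mul, Nat.mul_comm]
      rw [mul_pow, mul_pow, hpow]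
      ring
    rw [tsum_congr hterm, tsum_mul_left]
    congr 1
    have hpa : p / a * (a * p ^ j) = p * p ^ j := by
      field_simp
    rw [qBinom (p / a) p (a * p ^ j) hp (hapj j) (by rw [hpa]; exact hppj j), hpa]
  rw [tsum_congr hj, ← tsum_mul_left]
  -- step 4: final simplification termwise
  apply tsum_congr
  intro j
  have hsa := qPochInf_split ha hp j
  have hsp := qPochInf_split hp hp j
  rw [hsa, hsp]
  have h1 : qPochInf (a * p ^ j) p ≠ 0 := qPochInf_ne_zero (hapj j) hp
  have h2 : qPochInf (p * p ^ j) p ≠ 0 := qPochInf_ne_zero (hppj j) hp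
  have h3 : qPoch p p j ≠ 0 := qPoch_ne_zero hp hp.le j
  have h4 : qPoch q q j ≠ 0 := qPoch_ne_zero hq hq.le j
  field_simp
  have h2' : qPochInf (p ^ j * p) p ≠ 0 := by rw [mul_comm]; exact h2
  linear_combination (qPoch a p j * qPoch b q j * x ^ j) * mul_inv_cancel₀ h2'
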